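/- (Arhangel'skii) Every first-countable Lindelöf Hausdorff space has cardinality at most 2^{ℵ₀}. -/

import Mathlib

open Cardinal

namespace ArhAux

open Set Filter Topology

universe u

/-! Auxiliary machinery for Arhangel'skii's theorem. -/

abbrev W : Type u := (Cardinal.aleph.{u} 1).ord.ToType

lemma countable_bounded {S : Set W.{u}} (hS : S.Countable) : ∃ w : W.{u}, ∀ x ∈ S, x < w := by
  haveI : IsWellOrder W.{u} (· < ·) := isWellOrder_lt
  by_contra hc
  push_neg at hc
  have hcof := Order.cof_le (s := S) hc
  rw [Ordinal.cof_toType, Cardinal.isRegular_aleph_one.cof_eq] at hcof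
  exact absurd (hcof.trans (mk_le_aleph0_iff.2 hS)) (not_le.2 Cardinal.aleph0_lt_aleph_one)

lemma mk_Iio_le (w : W.{u}) : #(Set.Iio w) ≤ 𝔠 := by
  haveI : IsWellOrder W.{u} (· < ·) := isWellOrder_lt
  have h : #{y : W.{u} // y < w} < Cardinal.aleph 1 := by
    exact Cardinal.card_typein_toType_lt (Cardinal.aleph 1) w
  exact le_of_lt (lt_of_lt_of_le h aleph_one_le_continuum)

instance : Nonempty W.{u} := by
  rw [Ordinal.toType_nonempty_iff_ne_zero]
  simp only [ne_eq, Cardinal.ord_eq_zero]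
  exact (Cardinal.aleph_pos 1).ne'

variable {X : Type u} [TopologicalSpace X] [T2Space X] [FirstCountableTopology X]

lemma exists_nbhds (x : X) : ∃ U : ℕ → Set X, (∀ n, IsOpen (U n)) ∧ (∀ n, x ∈ U n) ∧
    ∀ y, y ≠ x → ∃ n, y ∉ U n := by
  obtain ⟨s, hs⟩ := (𝓝 x).exists_antitone_basis
  refine ⟨fun n => interior (s n), fun n => isOpen_interior,
    fun n => mem_interior_iff_mem_nhds.2 (hs.mem n), fun y hy => ?_⟩
  obtain ⟨n, -, hn⟩ := hs.1.mem_iff.mp (compl_singleton_mem_nhds hy.symm)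
  exact ⟨n, fun h => hn (interior_subset h) rfl⟩

lemma mk_closure_le (B : Set X) (hB : #B ≤ 𝔠) : #(closure B) ≤ 𝔠 := by
  classical
  have : ∀ y : closure B, ∃ u : ℕ → X, (∀ n, u n ∈ B) ∧ Tendsto u atTop (𝓝 (y : X)) := by
    intro y; exact mem_closure_iff_seq_limit.mp y.2
  choose u hu hconv using this
  have hinj : Function.Injective fun y : closure B => fun n => (⟨u y n, hu y n⟩ : B) := by
    intro y z h
    have : u y = u z := funext fun n => congrArg Subtype.val (congrFun h n)
    exact Subtype.ext (tendsto_nhds_unique (hconv y) (this ▸ hconv z))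
  calc #(closure B) ≤ #(ℕ → B) := mk_le_of_injective hinj
    _ = (#B) ^ (ℵ₀ : Cardinal) := by rw [mk_arrow]; simp
    _ ≤ 𝔠 ^ (ℵ₀ : Cardinal) := power_le_power_right hB
    _ = 𝔠 := continuum_power_aleph0

noncomputable def pick [Nonempty X] (U : X → ℕ → Set X) (g : ℕ → X × ℕ) : X := by
  classical exact
    if h : (⋃ n, U (g n).1 (g n).2)ᶜ.Nonempty then h.choose else Classical.arbitrary X

omit [T2Space X] [FirstCountableTopology X] [TopologicalSpace X] in
lemma pick_spec [Nonempty X] (U : X → ℕ → Set X) (g : ℕ → X × ℕ)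
    (h : (⋃ n, U (g n).1 (g n).2)ᶜ.Nonempty) : pick U g ∉ ⋃ n, U (g n).1 (g n).2 := by
  classical
  rw [pick]
  simp only [dif_pos h]
  exact h.choose_spec

noncomputable def F [Nonempty X] (U : X → ℕ → Set X) (x₀ : X) (B : Set X) : Set X :=
  insert x₀ (closure B ∪ (range fun g : ℕ → B × ℕ => pick U fun n => ((g n).1, (g n).2)))

omit [T2Space X] [FirstCountableTopology X] in
lemma subset_F [Nonempty X] (U : X → ℕ → Set X) (x₀ : X) (B : Set X) : B ⊆ F U x₀ B :=
  subset_closure.trans ((subset_union_left).trans (subset_insert _ _))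

omit [T2Space X] [FirstCountableTopology X] in
lemma closure_subset_F [Nonempty X] (U : X → ℕ → Set X) (x₀ : X) (B : Set X) :
    closure B ⊆ F U x₀ B :=
  (subset_union_left).trans (subset_insert _ _)

omit [T2Space X] [FirstCountableTopology X] in
lemma x₀_mem_F [Nonempty X] (U : X → ℕ → Set X) (x₀ : X) (B : Set X) : x₀ ∈ F U x₀ B :=
  mem_insert _ _

omit [T2Space X] [FirstCountableTopology X] in
lemma pick_mem_F [Nonempty X] (U : X → ℕ → Set X) (x₀ : X) (B : Set X) (g : ℕ → X × ℕ)
    (hg : ∀ n, (g n).1 ∈ B) : pick U g ∈ F U x₀ B := by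
  refine mem_insert_of_mem _ (Or.inr ⟨fun n => (⟨(g n).1, hg n⟩, (g n).2), ?_⟩)
  simp

lemma mk_F_le [Nonempty X] (U : X → ℕ → Set X) (x₀ : X) (B : Set X) (hB : #B ≤ 𝔠) :
    #(F U x₀ B) ≤ 𝔠 := by
  have h1 : #(closure B) ≤ 𝔠 := mk_closure_le B hB
  have h2 : #(range fun g : ℕ → B × ℕ => pick U fun n => ((g n).1, (g n).2)) ≤ 𝔠 := by
    refine mk_range_le.trans ?_
    have he : #(ℕ → B × ℕ) = (#B * ℵ₀) ^ (ℵ₀ : Cardinal) := by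
      rw [mk_arrow]; simp [mk_prod]
    rw [he]
    have hBa : #B * ℵ₀ ≤ 𝔠 :=
      (mul_le_max _ _).trans (max_le (max_le hB aleph0_le_continuum) aleph0_le_continuum)
    calc (#B * ℵ₀) ^ (ℵ₀ : Cardinal) ≤ 𝔠 ^ (ℵ₀ : Cardinal) := power_le_power_right hBa
      _ = 𝔠 := continuum_power_aleph0
  calc #(F U x₀ B) ≤ #(closure B ∪ range fun g : ℕ → B × ℕ =>
        pick U fun n => ((g n).1, (g n).2) : Set X) + 1 := mk_insert_le
    _ ≤ (𝔠 + 𝔠) + 1 := by gcongr; exact (mk_union_le _ _).trans (by gcongr)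
    _ ≤ 𝔠 := by
        rw [add_eq_self aleph0_le_continuum, add_one_eq aleph0_le_continuum]

/-- The transfinite chain of length `ω₁`. -/
noncomputable def chain [Nonempty X] (U : X → ℕ → Set X) (x₀ : X) : W.{u} → Set X :=
  IsWellFounded.fix (· < ·) fun w ih => F U x₀ (⋃ w' : Set.Iio w, ih w' w'.2)

omit [T2Space X] [FirstCountableTopology X] in
lemma chain_eq [Nonempty X] (U : X → ℕ → Set X) (x₀ : X) (w : W.{u}) :
    chain U x₀ w = F U x₀ (⋃ w' : Set.Iio w, chain U x₀ w') :=
  IsWellFounded.fix_eq _ _ w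

omit [T2Space X] [FirstCountableTopology X] in
lemma chain_mono [Nonempty X] (U : X → ℕ → Set X) (x₀ : X) {w' w : W.{u}} (h : w' ≤ w) :
    chain U x₀ w' ⊆ chain U x₀ w := by
  rcases eq_or_lt_of_le h with rfl | h
  · exact subset_rfl
  · rw [chain_eq U x₀ w]
    exact (subset_iUnion (fun w'' : Set.Iio w => chain U x₀ w'') ⟨w', h⟩).trans
      (subset_F U x₀ _)

lemma chain_card [Nonempty X] (U : X → ℕ → Set X) (x₀ : X) (w : W.{u}) :
    #(chain U x₀ w) ≤ 𝔠 := by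
  refine IsWellFounded.induction (α := W.{u}) (· < ·) (motive := fun w => #(chain U x₀ w) ≤ 𝔠) w ?_
  intro w ih
  · rw [chain_eq U x₀ w]
    refine mk_F_le U x₀ _ ?_
    rcases isEmpty_or_nonempty (Set.Iio w) with he | hne
    · rw [Set.iUnion_of_empty]
      simp [le_of_lt (nat_lt_continuum 0)] -- #∅ = 0 ≤ 𝔠
    · refine (mk_iUnion_le _).trans ?_
      have h1 : #(Set.Iio w) ≤ 𝔠 := mk_Iio_le w
      have h2 : ⨆ w' : Set.Iio w, #(chain U x₀ w') ≤ 𝔠 :=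
        ciSup_le' fun w' => ih w' w'.2
      calc #(Set.Iio w) * ⨆ w' : Set.Iio w, #(chain U x₀ w') ≤ 𝔠 * 𝔠 := mul_le_mul' h1 h2
        _ = 𝔠 := mul_eq_self aleph0_le_continuum

end ArhAux

open Set Filter Topology

/-- (Arhangel'skii) Every first-countable Lindelöf Hausdorff space has cardinality at
most `2^ℵ₀`. -/
theorem statement7 {X : Type*} [TopologicalSpace X] [T2Space X]
    [FirstCountableTopology X] [LindelofSpace X] :
    #X ≤ 2 ^ ℵ₀ := by
  classical
  rw [two_power_aleph0]
  rcases isEmpty_or_nonempty X with hX | hX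
  · simp [mk_eq_zero X]
  choose U hUo hUx hUsep using ArhAux.exists_nbhds (X := X)
  haveI : Nonempty X := hX
  obtain ⟨x₀⟩ := hX
  set Y : Set X := ⋃ w, ArhAux.chain U x₀ w with hY
  have hmemY : ∀ {x : X}, x ∈ Y → ∃ w, x ∈ ArhAux.chain U x₀ w := fun hx => mem_iUnion.mp hx
  -- Y is closed
  have hclosedY : IsClosed Y := by
    refine isClosed_of_closure_subset fun y hy => ?_
    obtain ⟨u, hu, hconv⟩ := mem_closure_iff_seq_limit.mp hy
    choose wn hwn using fun n => hmemY (hu n)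
    obtain ⟨ws, hws⟩ := ArhAux.countable_bounded (countable_range wn)
    have huA : ∀ n, u n ∈ ArhAux.chain U x₀ ws := fun n =>
      ArhAux.chain_mono U x₀ (le_of_lt (hws _ (mem_range_self n))) (hwn n)
    have hyc : y ∈ closure (ArhAux.chain U x₀ ws) := mem_closure_iff_seq_limit.mpr ⟨u, huA, hconv⟩
    obtain ⟨wt, hwt⟩ := ArhAux.countable_bounded (countable_singleton ws)
    have hlt : ws < wt := hwt ws rfl
    have : closure (ArhAux.chain U x₀ ws) ⊆ ArhAux.chain U x₀ wt := by
      rw [ArhAux.chain_eq U x₀ wt]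
      exact (closure_mono (subset_iUnion (fun w' : Set.Iio wt => ArhAux.chain U x₀ w'.1) ⟨ws, hlt⟩)).trans
        (ArhAux.closure_subset_F U x₀ _)
    exact mem_iUnion.mpr ⟨wt, this hyc⟩
  have hx₀Y : x₀ ∈ Y := mem_iUnion.mpr ⟨Classical.arbitrary _,
    by rw [ArhAux.chain_eq U x₀]; exact ArhAux.x₀_mem_F U x₀ _⟩
  -- Y is everything
  have hYuniv : Y = Set.univ := by
    by_contra h
    obtain ⟨p, hp⟩ : ∃ p, p ∉ Y := by
      by_contra hc
      push_neg at hc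
      exact h (Set.eq_univ_iff_forall.mpr hc)
    have hsep : ∀ x : Y, ∃ n, p ∉ U x n :=
      fun x => hUsep x p fun he => hp (he ▸ x.2)
    choose nsel hnsel using hsep
    have hcov : Y ⊆ ⋃ x : Y, U x (nsel x) :=
      fun y hy => mem_iUnion.mpr ⟨⟨y, hy⟩, hUx _ _⟩
    obtain ⟨t, htc, htcov⟩ := hclosedY.isLindelof.elim_countable_subcover
      (fun x : Y => U x (nsel x)) (fun _ => hUo _ _) hcov
    have htne : t.Nonempty := by
      rcases t.eq_empty_or_nonempty with rfl | hne
      · simpa using htcov hx₀Y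
      · exact hne
    obtain ⟨e, rfl⟩ := htc.exists_eq_range htne
    rw [biUnion_range] at htcov
    choose wn hwn using fun n => hmemY (e n).2
    obtain ⟨wb, hwb⟩ := ArhAux.countable_bounded (countable_range wn)
    set g : ℕ → X × ℕ := fun n => (((e n) : X), nsel (e n)) with hg
    have hne : (⋃ n, U (g n).1 (g n).2)ᶜ.Nonempty := by
      refine ⟨p, ?_⟩
      simp only [mem_compl_iff, mem_iUnion, not_exists]
      exact fun n => hnsel (e n)
    have hq1 : ArhAux.pick U g ∉ ⋃ n, U (g n).1 (g n).2 := ArhAux.pick_spec U g hne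
    have hgB : ∀ n, (g n).1 ∈ ⋃ w' : Set.Iio wb, ArhAux.chain U x₀ w' := fun n =>
      mem_iUnion.mpr ⟨⟨wn n, hwb _ (mem_range_self n)⟩, hwn n⟩
    have hq2 : ArhAux.pick U g ∈ ArhAux.chain U x₀ wb := by
      rw [ArhAux.chain_eq]
      exact ArhAux.pick_mem_F U x₀ _ g hgB
    exact hq1 (htcov (mem_iUnion.mpr ⟨wb, hq2⟩))
  -- cardinality of Y
  have hYcard : #Y ≤ 𝔠 := by
    refine (mk_iUnion_le _).trans ?_
    have h1 : #(ArhAux.W) ≤ 𝔠 := by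
      rw [Cardinal.mk_ord_toType]; exact aleph_one_le_continuum
    have h2 : ⨆ w, #(ArhAux.chain U x₀ w) ≤ 𝔠 := ciSup_le' fun w => ArhAux.chain_card U x₀ w
    calc #(ArhAux.W) * ⨆ w, #(ArhAux.chain U x₀ w) ≤ 𝔠 * 𝔠 := mul_le_mul' h1 h2
      _ = 𝔠 := mul_eq_self aleph0_le_continuum
  calc #X = #(Set.univ : Set X) := mk_univ.symm
    _ = #Y := by rw [hYuniv]
    _ ≤ 𝔠 := hYcard
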